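/- Let K_N = Σ_{j=1}^N I_j with I_j independent Bernoulli(1/(2N-2j+1)). For every fixed ε > 0 there is a constant C such that E[e^{ε K_N}] ≤ C · N^{(e^ε - 1)/2} for all N; explicitly E[e^{ε K_N}] = Γ(N + e^ε/2)√π / (Γ(N + 1/2)Γ(e^ε/2)). -/

import Mathlib

open Real Finset MeasureTheory Filter

/-- Probability that the `j`-th pairing (0-indexed; the paper's `j+1`-th) closes a
cycle in `CM_N(2)`: `1/(2N - 2(j+1) + 1)`. -/
noncomputable def bernProb (N j : ℕ) : ℝ := 1 / (2 * (N : ℝ) - 2 * ((j : ℝ) + 1) + 1)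

/-- Bernoulli measure on `Bool` with success probability `p`. -/
noncomputable def bern (p : ℝ) : Measure Bool :=
  ENNReal.ofReal p • Measure.dirac true + ENNReal.ofReal (1 - p) • Measure.dirac false

/-- The law of the independent cycle-closing indicators `(I_1, …, I_N)` of `CM_N(2)`:
the product of Bernoulli`(1/(2N-2j+1))` measures. -/
noncomputable def cycleMeasure (N : ℕ) : Measure (Fin N → Bool) :=
  Measure.pi fun j => bern (bernProb N (j : ℕ))

/-- `K_N = ∑_{j=1}^N I_j`, the number of cycles in `CM_N(2)`. -/
noncomputable def KN (N : ℕ) (ω : Fin N → Bool) : ℝ := ∑ j : Fin N, if ω j then 1 else 0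

instance bern_isFiniteMeasure (p : ℝ) : IsFiniteMeasure (bern p) := by
  constructor
  rw [bern]
  simp only [Measure.coe_add, Measure.coe_smul, Pi.add_apply, Pi.smul_apply, smul_eq_mul]
  exact lt_of_le_of_lt (add_le_add (mul_le_of_le_one_right zero_le (le_of_le_of_eq
    (measure_mono (Set.subset_univ _)) (by simp))) (mul_le_of_le_one_right zero_le
    (le_of_le_of_eq (measure_mono (Set.subset_univ _)) (by simp))))
    (by simp [ENNReal.add_lt_top])

lemma integral_bern (p : ℝ) (hp0 : 0 ≤ p) (hp1 : p ≤ 1) (f : Bool → ℝ) :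
    ∫ b, f b ∂(bern p) = p * f true + (1 - p) * f false := by
  haveI i1 : IsFiniteMeasure (ENNReal.ofReal p • Measure.dirac true : Measure Bool) :=
    ⟨by simp [ENNReal.ofReal_lt_top]⟩
  haveI i2 : IsFiniteMeasure (ENNReal.ofReal (1 - p) • Measure.dirac false : Measure Bool) :=
    ⟨by simp [ENNReal.ofReal_lt_top]⟩
  have h1 : Integrable f (ENNReal.ofReal p • Measure.dirac true) := .of_finite
  have h2 : Integrable f (ENNReal.ofReal (1 - p) • Measure.dirac false) := .of_finite
  rw [bern, integral_add_measure h1 h2, integral_smul_measure, integral_smul_measure,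
    integral_dirac, integral_dirac, ENNReal.toReal_ofReal hp0,
    ENNReal.toReal_ofReal (by linarith)]
  simp [smul_eq_mul]

lemma gamma_prod (a : ℝ) (ha : 0 < a) (N : ℕ) :
    ∏ m ∈ Finset.range N, ((m : ℝ) + a) = Real.Gamma ((N : ℝ) + a) / Real.Gamma a := by
  induction N with
  | zero => simp [div_self (Real.Gamma_pos_of_pos ha).ne']
  | succ n ih =>
      rw [Finset.prod_range_succ, ih]
      have h1 : ((n : ℝ) + 1 + a) = ((n : ℝ) + a) + 1 := by ring
      have h2 : (0 : ℝ) < (n : ℝ) + a := by positivity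
      rw [Nat.cast_succ, h1, Real.Gamma_add_one h2.ne']
      field_simp

lemma mgf_eq (ε : ℝ) (N : ℕ) :
    ∫ ω, Real.exp (ε * KN N ω) ∂(cycleMeasure N)
      = ∏ m ∈ Finset.range N, (((m : ℝ) + Real.exp ε / 2) / ((m : ℝ) + 1 / 2)) := by
  letI inst : ∀ _ : Fin N, MeasureSpace Bool := fun j => ⟨bern (bernProb N j)⟩
  have hsf : ∀ i : Fin N, SigmaFinite (@MeasureSpace.volume Bool (inst i)) := fun i => by
    change SigmaFinite (bern (bernProb N i))
    infer_instance
  have hKN : ∀ ω : Fin N → Bool, Real.exp (ε * KN N ω)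
      = ∏ j : Fin N, Real.exp (ε * if ω j then 1 else 0) := by
    intro ω
    rw [KN, Finset.mul_sum, Real.exp_sum]
  have hpi : ∫ ω, Real.exp (ε * KN N ω) ∂(cycleMeasure N)
      = ∏ j : Fin N, ∫ b, Real.exp (ε * if b then 1 else 0) ∂(bern (bernProb N (j : ℕ))) := by
    have := MeasureTheory.integral_fintype_prod_eq_prod (ι := Fin N)
      (fun (_ : Fin N) (b : Bool) => Real.exp (ε * if b then 1 else 0))
      (μ := fun j => bern (bernProb N (j : ℕ)))
    simp_rw [hKN]
    exact this
  rw [hpi]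
  have hfact : ∀ j : Fin N,
      ∫ b, Real.exp (ε * if b then 1 else 0) ∂(bern (bernProb N (j : ℕ)))
        = bernProb N j * Real.exp ε + (1 - bernProb N j) := by
    intro j
    have hjN : (j : ℝ) + 1 ≤ (N : ℝ) := by exact_mod_cast j.isLt
    have hd : (1 : ℝ) ≤ 2 * (N : ℝ) - 2 * ((j : ℝ) + 1) + 1 := by linarith
    have hp0 : 0 ≤ bernProb N j := by
      rw [bernProb]; positivity
    have hp1 : bernProb N j ≤ 1 := by
      rw [bernProb]
      exact (div_le_one (by linarith)).mpr hd
    rw [integral_bern _ hp0 hp1]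
    simp [Real.exp_zero]
  rw [Finset.prod_congr rfl fun j _ => hfact j]
  rw [Fin.prod_univ_eq_prod_range (fun j => bernProb N j * Real.exp ε + (1 - bernProb N j)) N]
  rw [← Finset.prod_range_reflect (fun m => (((m : ℕ) : ℝ) + Real.exp ε / 2) / (((m : ℕ) : ℝ) + 1 / 2)) N]
  apply Finset.prod_congr rfl
  intro j hj
  have hjN : j < N := Finset.mem_range.mp hj
  have hjR : (j : ℝ) + 1 ≤ (N : ℝ) := by exact_mod_cast hjN
  have hcast : ((N - 1 - j : ℕ) : ℝ) = (N : ℝ) - 1 - (j : ℝ) := by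
    have h1 : N - 1 - j = N - (j + 1) := by omega
    rw [h1, Nat.cast_sub (by omega)]
    push_cast; ring
  rw [bernProb, hcast]
  have hd : (0 : ℝ) < 2 * (N : ℝ) - 2 * ((j : ℝ) + 1) + 1 := by linarith
  have hd2 : (0 : ℝ) < (N : ℝ) - 1 - (j : ℝ) + 1 / 2 := by linarith
  rw [eq_div_iff hd2.ne']
  rw [show (N:ℝ) - 1 - j + 1/2 = (2 * (N : ℝ) - 2 * ((j : ℝ) + 1) + 1) / 2 by ring]
  have hD := hd.ne'
  generalize hDdef : 2 * (N : ℝ) - 2 * ((j : ℝ) + 1) + 1 = D at hD ⊢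
  field_simp [hd.ne']
  rw [← hDdef]
  ring

/-- With `K_N = ∑_{j=1}^N I_j` a sum of independent Bernoulli`(1/(2N-2j+1))`
variables, for every fixed `ε > 0`:
`E[e^{ε K_N}] = Γ(N + e^ε/2)√π / (Γ(N + 1/2) Γ(e^ε/2))` and there is a constant
`C > 0` with `E[e^{ε K_N}] ≤ C · N^{(e^ε - 1)/2}` for all `N ≥ 1`. -/
theorem cm2_cycles_mgf_upper (ε : ℝ) (hε : 0 < ε) :
    (∀ N : ℕ,
      ∫ ω, Real.exp (ε * KN N ω) ∂(cycleMeasure N)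
        = Real.Gamma ((N : ℝ) + Real.exp ε / 2) * Real.sqrt π
            / (Real.Gamma ((N : ℝ) + 1 / 2) * Real.Gamma (Real.exp ε / 2))) ∧
    ∃ C : ℝ, 0 < C ∧ ∀ N : ℕ, 1 ≤ N →
      ∫ ω, Real.exp (ε * KN N ω) ∂(cycleMeasure N)
        ≤ C * (N : ℝ) ^ ((Real.exp ε - 1) / 2) := by
  have ha : (0 : ℝ) < Real.exp ε / 2 := by positivity
  have h12 : (0 : ℝ) < (1 : ℝ) / 2 := by norm_num
  constructor
  · intro N
    rw [mgf_eq, Finset.prod_div_distrib, gamma_prod _ ha N, gamma_prod _ h12 N,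
      Real.Gamma_one_half_eq]
    have h1 := Real.Gamma_pos_of_pos ha
    have h2 : 0 < Real.Gamma ((N : ℝ) + 1 / 2) := Real.Gamma_pos_of_pos (by positivity)
    have h3 : 0 < Real.sqrt π := Real.sqrt_pos.mpr pi_pos
    field_simp
  · set s : ℝ := (Real.exp ε - 1) / 2 with hs
    have hexp : 1 < Real.exp ε := by
      have := Real.add_one_le_exp ε
      linarith
    have hspos : 0 < s := by rw [hs]; linarith
    refine ⟨Real.exp (3 * s), Real.exp_pos _, fun N hN => ?_⟩
    have hN0 : (0 : ℝ) < (N : ℝ) := by exact_mod_cast hN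
    rw [mgf_eq]
    have hsum : ∑ m ∈ Finset.range N, 1 / ((m : ℝ) + 1 / 2) ≤ 3 + Real.log N := by
      obtain ⟨n, rfl⟩ := Nat.exists_eq_succ_of_ne_zero (Nat.one_le_iff_ne_zero.mp hN)
      rw [Finset.sum_range_succ']
      have h1 : ∑ i ∈ Finset.range n, 1 / (((i + 1 : ℕ) : ℝ) + 1 / 2)
          ≤ ∑ i ∈ Finset.range n, 1 / ((i : ℝ) + 1) := by
        refine Finset.sum_le_sum fun i _ => ?_
        apply one_div_le_one_div_of_le (by positivity)
        push_cast; linarith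
      have h2 : ∑ i ∈ Finset.range n, 1 / ((i : ℝ) + 1) = ((harmonic n : ℚ) : ℝ) := by
        rw [harmonic]
        push_cast
        simp [one_div]
      have h3 : ((harmonic n : ℚ) : ℝ) ≤ 1 + Real.log n := harmonic_le_one_add_log n
      have h4 : Real.log n ≤ Real.log (n + 1 : ℕ) := by
        rcases Nat.eq_zero_or_pos n with h | h
        · subst h
          simp
        · apply Real.log_le_log (by exact_mod_cast h)
          exact_mod_cast Nat.le_succ n
      have h5 : 1 / ((0 : ℝ) + 1 / 2) = 2 := by norm_num
      push_cast at h5 ⊢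
      push_cast at h1 h2 h3 h4
      linarith
    have hprod : ∏ m ∈ Finset.range N, (((m : ℝ) + Real.exp ε / 2) / ((m : ℝ) + 1 / 2))
        ≤ Real.exp (s * ∑ m ∈ Finset.range N, 1 / ((m : ℝ) + 1 / 2)) := by
      rw [Finset.mul_sum, Real.exp_sum]
      refine Finset.prod_le_prod (fun m _ => by positivity) (fun m _ => ?_)
      have hden : (0 : ℝ) < (m : ℝ) + 1 / 2 := by positivity
      have heq : ((m : ℝ) + Real.exp ε / 2) / ((m : ℝ) + 1 / 2)
          = s * (1 / ((m : ℝ) + 1 / 2)) + 1 := by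
        rw [hs]; field_simp; ring
      rw [heq]
      exact Real.add_one_le_exp _
    calc ∏ m ∈ Finset.range N, (((m : ℝ) + Real.exp ε / 2) / ((m : ℝ) + 1 / 2))
        ≤ Real.exp (s * ∑ m ∈ Finset.range N, 1 / ((m : ℝ) + 1 / 2)) := hprod
      _ ≤ Real.exp (s * (3 + Real.log N)) := by
          apply Real.exp_le_exp.mpr
          exact mul_le_mul_of_nonneg_left hsum hspos.le
      _ = Real.exp (3 * s) * (N : ℝ) ^ s := by
          rw [Real.rpow_def_of_pos hN0, ← Real.exp_add]
          ring_nf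
      _ = Real.exp (3 * s) * (N : ℝ) ^ ((Real.exp ε - 1) / 2) := by rw [hs]
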